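/- Let H be a horizontal trajectory with n edges and fix a side length s > 0. If (x, y) ∈ ℝ² is such that w_H(x, y) > 0, then there exists an index j ∈ {0, …, n} such that w_H(x, (p_j).2 − s) ≥ w_H(x, y); that is, there is a square of at least the same weight whose upper side has the same y-coordinate as a vertex of H. -/

import Mathlib

open MeasureTheory Set
open scoped ENNReal

/-- `Square s x y` is the axis-parallel square `[x, x+s] × [y, y+s]`. -/
def Square (s x y : ℝ) : Set (ℝ × ℝ) := Icc x (x + s) ×ˢ Icc y (y + s)

/-- The weight of `Square s x y` with respect to a trajectory `T` on `[t0, tn]`: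
the Lebesgue measure of `{t ∈ [t0, tn] : T t ∈ Square s x y}`. -/
noncomputable def wgt (s t0 tn : ℝ) (T : ℝ → ℝ × ℝ) (x y : ℝ) : ℝ≥0∞ :=
  volume {τ ∈ Icc t0 tn | T τ ∈ Square s x y}

lemma exists_edge (n : ℕ) (hn : 0 < n) (t : Fin (n + 1) → ℝ) (ht : Monotone t)
    (τ : ℝ) (hτ : τ ∈ Icc (t 0) (t (Fin.last n))) :
    ∃ i : Fin n, τ ∈ Icc (t i.castSucc) (t i.succ) := by
  classical
  set F : Finset (Fin (n + 1)) := Finset.univ.filter (fun i => t i ≤ τ) with hF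
  have h0 : (0 : Fin (n + 1)) ∈ F := by
    simp [hF, hτ.1]
  have hFne : F.Nonempty := ⟨0, h0⟩
  set j := F.max' hFne with hj
  have hjF : j ∈ F := F.max'_mem hFne
  have hjle : t j ≤ τ := by
    have := hjF; simpa [hF] using this
  by_cases hlast : (j : ℕ) < n
  · refine ⟨⟨j, hlast⟩, ?_, ?_⟩
    · have : (⟨(j : ℕ), hlast⟩ : Fin n).castSucc = j := by
        apply Fin.ext; simp
      rw [this]; exact hjle
    · by_contra hcon
      push_neg at hcon
      simp only [Fin.succ_mk] at hcon
      have hmem : (⟨(j : ℕ), hlast⟩ : Fin n).succ ∈ F := by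
        simp only [hF, Finset.mem_filter, Finset.mem_univ, true_and, Fin.succ_mk]
        exact hcon.le
      have := F.le_max' _ hmem
      rw [← hj] at this
      have : ((⟨(j : ℕ), hlast⟩ : Fin n).succ : ℕ) ≤ (j : ℕ) := this
      simp at this
  · push_neg at hlast
    have hjlast : j = Fin.last n := by
      apply Fin.ext
      have := j.isLt
      simp [Fin.last]
      omega
    have hτeq : τ = t (Fin.last n) := le_antisymm hτ.2 (hjlast ▸ hjle)
    refine ⟨⟨n - 1, by omega⟩, ?_, ?_⟩
    · refine le_trans ?_ hτeq.ge
      exact ht (by simp [Fin.le_def])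
    · have : (⟨n - 1, by omega⟩ : Fin n).succ = Fin.last n := by
        apply Fin.ext; simp [Fin.last]; omega
      rw [this, hτeq]

theorem tracked_square_dominates
    (n : ℕ) (s : ℝ) (hs : 0 < s)
    (t : Fin (n + 1) → ℝ) (ht : StrictMono t)
    (p : Fin (n + 1) → ℝ × ℝ)
    (T : ℝ → ℝ × ℝ)
    (hT : ∀ i : Fin n, ∀ τ ∈ Icc (t i.castSucc) (t i.succ),
      T τ = p i.castSucc +
        ((τ - t i.castSucc) / (t i.succ - t i.castSucc)) • (p i.succ - p i.castSucc))
    (hhoriz : ∀ i : Fin n, (p i.castSucc).2 = (p i.succ).2)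
    (x y : ℝ) (hw : 0 < wgt s (t 0) (t (Fin.last n)) T x y) :
    ∃ j : Fin (n + 1),
      wgt s (t 0) (t (Fin.last n)) T x ((p j).2 - s) ≥
        wgt s (t 0) (t (Fin.last n)) T x y := by
  classical
  have hn : 0 < n := by
    rcases Nat.eq_zero_or_pos n with h | h
    · exfalso
      subst h
      have hsub : {τ ∈ Icc (t 0) (t (Fin.last 0)) | T τ ∈ Square s x y} ⊆ {t 0} := by
        intro τ hτ
        have : τ ∈ Icc (t 0) (t 0) := by simpa using hτ.1
        simpa using this
      have : wgt s (t 0) (t (Fin.last 0)) T x y ≤ volume ({t 0} : Set ℝ) :=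
        measure_mono hsub
      simp [Real.volume_singleton] at this
      have h0 : Fin.last 0 = 0 := rfl
      rw [h0, this] at hw
      exact lt_irrefl _ hw
    · exact h
  -- y-coordinate along each edge is constant
  have hyc : ∀ τ ∈ Icc (t 0) (t (Fin.last n)), ∃ i : Fin n, (T τ).2 = (p i.castSucc).2 := by
    intro τ hτ
    obtain ⟨i, hi⟩ := exists_edge n hn t ht.monotone τ hτ
    refine ⟨i, ?_⟩
    rw [hT i τ hi]
    simp [Prod.snd_add, ← hhoriz i]
  -- the set of vertex indices whose y-coord is in the strip
  set G : Finset (Fin (n + 1)) :=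
    Finset.univ.filter (fun j => (p j).2 ∈ Icc y (y + s)) with hG
  have hGne : G.Nonempty := by
    have hne : {τ ∈ Icc (t 0) (t (Fin.last n)) | T τ ∈ Square s x y}.Nonempty := by
      by_contra hE
      rw [not_nonempty_iff_eq_empty] at hE
      unfold wgt at hw
      rw [hE] at hw
      simp at hw
    obtain ⟨τ0, hτ0⟩ := hne
    obtain ⟨i, hi⟩ := hyc τ0 hτ0.1
    refine ⟨i.castSucc, ?_⟩
    have : (T τ0).2 ∈ Icc y (y + s) := hτ0.2.2
    rw [hi] at this
    simp only [hG, Finset.mem_filter, Finset.mem_univ, true_and]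
    exact this
  obtain ⟨j, hjG, hjmax⟩ := G.exists_max_image (fun j => (p j).2) hGne
  have hjy : (p j).2 ∈ Icc y (y + s) := by simpa [hG] using hjG
  refine ⟨j, ?_⟩
  unfold wgt
  apply measure_mono
  intro τ hτ
  refine ⟨hτ.1, hτ.2.1, ?_⟩
  obtain ⟨i, hi⟩ := hyc τ hτ.1
  have hstrip : (T τ).2 ∈ Icc y (y + s) := hτ.2.2
  have hiG : i.castSucc ∈ G := by
    rw [hi] at hstrip
    simp only [hG, Finset.mem_filter, Finset.mem_univ, true_and]
    exact hstrip
  have hle : (p i.castSucc).2 ≤ (p j).2 := hjmax _ hiG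
  constructor
  · have : (p j).2 - s ≤ y := by linarith [hjy.2]
    linarith [hstrip.1]
  · rw [hi]
    linarith [hle]
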